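/- The tension region T(X;Y) is unchanged if Z is restricted to alphabets of size at most |𝒳|·|𝒴| + 3, and consequently T(X;Y) is a compact subset of ℝ³. -/
import Mathlib


open Real BigOperators Finset

section Defs
variable {Ω : Type} [Fintype Ω]

/-- `p` is a probability mass function on the finite sample space `Ω`. -/
def IsPmf (p : Ω → ℝ) : Prop := (∀ ω, 0 ≤ p ω) ∧ ∑ ω, p ω = 1

/-- Distribution of the random variable `f` under `p`. -/
noncomputable def distOf (p : Ω → ℝ) {α : Type} [Fintype α] [DecidableEq α]
    (f : Ω → α) : α → ℝ := fun a => ∑ ω, if f ω = a then p ω else 0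

/-- Shannon entropy (in nats) of the random variable `f` under `p`. -/
noncomputable def ent (p : Ω → ℝ) {α : Type} [Fintype α] [DecidableEq α]
    (f : Ω → α) : ℝ := ∑ a, Real.negMulLog (distOf p f a)

/-- Mutual information `I(f;g)` under `p`. -/
noncomputable def mi (p : Ω → ℝ) {α β : Type} [Fintype α] [DecidableEq α]
    [Fintype β] [DecidableEq β] (f : Ω → α) (g : Ω → β) : ℝ :=
  ent p f + ent p g - ent p (fun ω => (f ω, g ω))

/-- Conditional mutual information `I(f;g|h)` under `p`. -/
noncomputable def cmi (p : Ω → ℝ) {α β γ : Type} [Fintype α] [DecidableEq α]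
    [Fintype β] [DecidableEq β] [Fintype γ] [DecidableEq γ]
    (f : Ω → α) (g : Ω → β) (h : Ω → γ) : ℝ :=
  ent p (fun ω => (f ω, h ω)) + ent p (fun ω => (g ω, h ω))
    - ent p (fun ω => (f ω, g ω, h ω)) - ent p h

end Defs

/-- Tension region of `(X,Y)`: the set of triples
`(I(X;Z|Y), I(Y;Z|X), I(X;Y|Z))` as `Z` ranges over all finitely supported
random variables jointly distributed with `(X,Y)`. -/
def tension {Ω : Type} [Fintype Ω] {α β : Type} [Fintype α] [DecidableEq α]
    [Fintype β] [DecidableEq β] (p : Ω → ℝ) (X : Ω → α) (Y : Ω → β) :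
    Set (ℝ × ℝ × ℝ) :=
  { t | ∃ (m : ℕ) (q : α × β × Fin m → ℝ), IsPmf q ∧
      distOf q (fun w => (w.1, w.2.1)) = distOf p (fun ω => (X ω, Y ω)) ∧
      t = (cmi q (fun w => w.1) (fun w => w.2.2) (fun w => w.2.1),
           cmi q (fun w => w.2.1) (fun w => w.2.2) (fun w => w.1),
           cmi q (fun w => w.1) (fun w => w.2.1) (fun w => w.2.2)) }


set_option linter.unusedSectionVars false

section Aux
variable {Ω : Type} [Fintype Ω] {γ δ : Type} [Fintype γ] [DecidableEq γ]
  [Fintype δ] [DecidableEq δ]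

lemma sum_distOf (p : Ω → ℝ) (f : Ω → γ) : ∑ a, distOf p f a = ∑ ω, p ω := by
  unfold distOf
  rw [Finset.sum_comm]
  refine Finset.sum_congr rfl fun ω _ => ?_
  simp

lemma distOf_comp_inj (e : γ → δ) (he : Function.Injective e) (p : Ω → ℝ) (f : Ω → γ) (c : γ) :
    distOf p (fun ω => e (f ω)) (e c) = distOf p f c := by
  unfold distOf
  refine Finset.sum_congr rfl fun ω _ => ?_
  simp [he.eq_iff]

lemma ent_comp_inj (e : γ → δ) (he : Function.Injective e) (p : Ω → ℝ) (f : Ω → γ) :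
    ent p (fun ω => e (f ω)) = ent p f := by
  unfold ent
  have h0 : ∀ d ∈ (Finset.univ : Finset δ), d ∉ Finset.univ.image e →
      Real.negMulLog (distOf p (fun ω => e (f ω)) d) = 0 := by
    intro d _ hd
    simp only [Finset.mem_image, Finset.mem_univ, true_and, not_exists] at hd
    have : distOf p (fun ω => e (f ω)) d = 0 :=
      Finset.sum_eq_zero fun ω _ => by simp [hd (f ω)]
    simp [this]
  rw [← Finset.sum_subset (Finset.subset_univ (Finset.univ.image e)) h0,
      Finset.sum_image (fun x _ y _ h => he h)]
  exact Finset.sum_congr rfl fun c _ => by rw [distOf_comp_inj e he]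

end Aux

section Mix
variable {α β : Type} [Fintype α] [DecidableEq α] [Fintype β] [DecidableEq β]

/-- mixture pmf on `α × β × Fin m` -/
noncomputable def mix {m : ℕ} (w : Fin m → ℝ) (r : Fin m → α × β → ℝ) :
    α × β × Fin m → ℝ := fun ω => w ω.2.2 * r ω.2.2 (ω.1, ω.2.1)

variable {γ : Type} [Fintype γ] [DecidableEq γ] {m : ℕ}

lemma distOf_mix_marg (w : Fin m → ℝ) (r : Fin m → α × β → ℝ) (g : α × β → γ) :
    distOf (mix w r) (fun ω => g (ω.1, ω.2.1)) = distOf (fun s => ∑ z, w z * r z s) g := by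
  funext c
  unfold distOf mix
  rw [Fintype.sum_prod_type]
  simp_rw [Fintype.sum_prod_type]
  refine Finset.sum_congr rfl fun a _ => ?_
  refine Finset.sum_congr rfl fun b _ => ?_
  by_cases h : g (a, b) = c <;> simp [h]

lemma ent_mix_marg (w : Fin m → ℝ) (r : Fin m → α × β → ℝ) (g : α × β → γ) :
    ent (mix w r) (fun ω => g (ω.1, ω.2.1)) = ent (fun s => ∑ z, w z * r z s) g := by
  unfold ent
  rw [distOf_mix_marg]

lemma distOf_mix_pair (w : Fin m → ℝ) (r : Fin m → α × β → ℝ) (g : α × β → γ)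
    (c : γ) (z : Fin m) :
    distOf (mix w r) (fun ω => (g (ω.1, ω.2.1), ω.2.2)) (c, z) = w z * distOf (r z) g c := by
  unfold distOf mix
  rw [Fintype.sum_prod_type]
  simp_rw [Fintype.sum_prod_type, Finset.mul_sum]
  refine Finset.sum_congr rfl fun a _ => ?_
  refine Finset.sum_congr rfl fun b _ => ?_
  rw [Fintype.sum_eq_single z (by intro z' hz'; simp [Prod.ext_iff]; tauto)]
  by_cases h : g (a, b) = c <;> simp [h, mul_comm]

lemma ent_mix_pair (w : Fin m → ℝ) (r : Fin m → α × β → ℝ) (hr : ∀ z, IsPmf (r z))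
    (g : α × β → γ) :
    ent (mix w r) (fun ω => (g (ω.1, ω.2.1), ω.2.2)) =
      ∑ z, w z * ent (r z) g + ∑ z, Real.negMulLog (w z) := by
  unfold ent
  rw [Fintype.sum_prod_type, Finset.sum_comm]
  have : ∀ z : Fin m, ∑ c, Real.negMulLog (distOf (mix w r) (fun ω => (g (ω.1,ω.2.1), ω.2.2)) (c, z))
      = w z * ent (r z) g + Real.negMulLog (w z) := by
    intro z
    have h1 : ∀ c, distOf (mix w r) (fun ω => (g (ω.1,ω.2.1), ω.2.2)) (c, z)
        = w z * distOf (r z) g c := fun c => distOf_mix_pair w r g c z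
    simp only [h1, Real.negMulLog_mul]
    rw [Finset.sum_add_distrib, ← Finset.sum_mul, ← Finset.mul_sum, sum_distOf, (hr z).2, one_mul]
    rw [ent]; ring
  simp_rw [this, Finset.sum_add_distrib]
  simp [ent]

lemma ent_mix_Z (w : Fin m → ℝ) (r : Fin m → α × β → ℝ) (hr : ∀ z, IsPmf (r z)) :
    ent (mix w r) (fun ω => ω.2.2) = ∑ z, Real.negMulLog (w z) := by
  unfold ent
  refine Finset.sum_congr rfl fun z _ => ?_
  have : distOf (mix w r) (fun ω => ω.2.2) z = w z := by
    unfold distOf mix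
    rw [Fintype.sum_prod_type]
    simp_rw [Fintype.sum_prod_type]
    have : ∀ a b, (∑ z' : Fin m, if z' = z then w z' * r z' (a, b) else 0)
        = w z * r z (a, b) := by intro a b; simp
    simp_rw [this, ← Finset.sum_product']
    rw [← Finset.mul_sum]
    have := (hr z).2
    rw [Fintype.sum_prod_type] at this
    rw [show ∑ x ∈ Finset.univ ×ˢ Finset.univ, r z x = ∑ a, ∑ b, r z (a,b) by
      rw [Finset.sum_product], this, mul_one]
  rw [this]


end Mix
section Mix2
variable {α β : Type} [Fintype α] [DecidableEq α] [Fintype β] [DecidableEq β]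
  {γ : Type} [Fintype γ] [DecidableEq γ] {m : ℕ}

/-- the three per-letter functionals -/
noncomputable def fA (r : α × β → ℝ) : ℝ := ent r Prod.snd - ent r (id : α × β → α × β)
noncomputable def fB (r : α × β → ℝ) : ℝ := ent r Prod.fst - ent r (id : α × β → α × β)
noncomputable def fC (r : α × β → ℝ) : ℝ :=
  ent r Prod.fst + ent r Prod.snd - ent r (id : α × β → α × β)

lemma cmi_mix (w : Fin m → ℝ) (r : Fin m → α × β → ℝ) (hr : ∀ z, IsPmf (r z)) :
    (cmi (mix w r) (fun ω => ω.1) (fun ω => ω.2.2) (fun ω => ω.2.1),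
     cmi (mix w r) (fun ω => ω.2.1) (fun ω => ω.2.2) (fun ω => ω.1),
     cmi (mix w r) (fun ω => ω.1) (fun ω => ω.2.1) (fun ω => ω.2.2)) =
    (ent (fun s => ∑ z, w z * r z s) (id : α × β → α × β)
       - ent (fun s => ∑ z, w z * r z s) Prod.snd + ∑ z, w z * fA (r z),
     ent (fun s => ∑ z, w z * r z s) (id : α × β → α × β)
       - ent (fun s => ∑ z, w z * r z s) Prod.fst + ∑ z, w z * fB (r z),
     ∑ z, w z * fC (r z)) := by
  set q := mix w r with hq
  set μ := fun s => ∑ z, w z * r z s with hμ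
  have eXY : ent q (fun ω => ((ω.1 : α), (ω.2.1 : β))) = ent μ (id : α × β → α × β) := by
    rw [show (fun ω : α × β × Fin m => ((ω.1 : α), (ω.2.1 : β)))
        = (fun ω => id ((ω.1 : α), (ω.2.1 : β))) from rfl]
    exact ent_mix_marg w r id
  have eY : ent q (fun ω => (ω.2.1 : β)) = ent μ Prod.snd := by
    rw [show (fun ω : α × β × Fin m => (ω.2.1 : β))
        = (fun ω => Prod.snd ((ω.1 : α), (ω.2.1 : β))) from rfl]
    exact ent_mix_marg w r Prod.snd
  have eX : ent q (fun ω => (ω.1 : α)) = ent μ Prod.fst := by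
    rw [show (fun ω : α × β × Fin m => (ω.1 : α))
        = (fun ω => Prod.fst ((ω.1 : α), (ω.2.1 : β))) from rfl]
    exact ent_mix_marg w r Prod.fst
  have eYX : ent q (fun ω => ((ω.2.1 : β), (ω.1 : α))) = ent μ (id : α × β → α × β) := by
    rw [show (fun ω : α × β × Fin m => ((ω.2.1 : β), (ω.1 : α)))
        = (fun ω => Prod.swap ((ω.1 : α), (ω.2.1 : β))) from rfl,
      ent_comp_inj Prod.swap Prod.swap_injective q (fun ω => ((ω.1 : α), (ω.2.1 : β)))]
    exact eXY
  have eZ : ent q (fun ω => (ω.2.2 : Fin m)) = ∑ z, Real.negMulLog (w z) := ent_mix_Z w r hr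
  have eXZ : ent q (fun ω => ((ω.1 : α), (ω.2.2 : Fin m)))
      = ∑ z, w z * ent (r z) Prod.fst + ∑ z, Real.negMulLog (w z) := by
    rw [show (fun ω : α × β × Fin m => ((ω.1 : α), (ω.2.2 : Fin m)))
        = (fun ω => (Prod.fst ((ω.1 : α), (ω.2.1 : β)), (ω.2.2 : Fin m))) from rfl]
    exact ent_mix_pair w r hr Prod.fst
  have eYZ : ent q (fun ω => ((ω.2.1 : β), (ω.2.2 : Fin m)))
      = ∑ z, w z * ent (r z) Prod.snd + ∑ z, Real.negMulLog (w z) := by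
    rw [show (fun ω : α × β × Fin m => ((ω.2.1 : β), (ω.2.2 : Fin m)))
        = (fun ω => (Prod.snd ((ω.1 : α), (ω.2.1 : β)), (ω.2.2 : Fin m))) from rfl]
    exact ent_mix_pair w r hr Prod.snd
  have eZY : ent q (fun ω => ((ω.2.2 : Fin m), (ω.2.1 : β)))
      = ∑ z, w z * ent (r z) Prod.snd + ∑ z, Real.negMulLog (w z) := by
    rw [show (fun ω : α × β × Fin m => ((ω.2.2 : Fin m), (ω.2.1 : β)))
        = (fun ω => Prod.swap ((ω.2.1 : β), (ω.2.2 : Fin m))) from rfl,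
      ent_comp_inj Prod.swap Prod.swap_injective q (fun ω => ((ω.2.1 : β), (ω.2.2 : Fin m)))]
    exact eYZ
  have eZX : ent q (fun ω => ((ω.2.2 : Fin m), (ω.1 : α)))
      = ∑ z, w z * ent (r z) Prod.fst + ∑ z, Real.negMulLog (w z) := by
    rw [show (fun ω : α × β × Fin m => ((ω.2.2 : Fin m), (ω.1 : α)))
        = (fun ω => Prod.swap ((ω.1 : α), (ω.2.2 : Fin m))) from rfl,
      ent_comp_inj Prod.swap Prod.swap_injective q (fun ω => ((ω.1 : α), (ω.2.2 : Fin m)))]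
    exact eXZ
  have eFull : ent q (fun ω => (((ω.1 : α), (ω.2.1 : β)), (ω.2.2 : Fin m)))
      = ∑ z, w z * ent (r z) (id : α × β → α × β) + ∑ z, Real.negMulLog (w z) := by
    rw [show (fun ω : α × β × Fin m => (((ω.1 : α), (ω.2.1 : β)), (ω.2.2 : Fin m)))
        = (fun ω => (id ((ω.1 : α), (ω.2.1 : β)), (ω.2.2 : Fin m))) from rfl]
    exact ent_mix_pair w r hr id
  have eXZY : ent q (fun ω => ((ω.1 : α), (ω.2.2 : Fin m), (ω.2.1 : β)))
      = ∑ z, w z * ent (r z) (id : α × β → α × β) + ∑ z, Real.negMulLog (w z) := by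
    have he : Function.Injective (fun x : (α × β) × Fin m => (x.1.1, x.2, x.1.2)) := by
      intro x y h
      simp only [Prod.mk.injEq] at h
      exact Prod.ext (Prod.ext h.1 h.2.2) h.2.1
    rw [ent_comp_inj (fun x : (α × β) × Fin m => (x.1.1, x.2, x.1.2)) he q (fun ω => (((ω.1 : α), (ω.2.1 : β)), (ω.2.2 : Fin m)))]
    exact eFull
  have eYZX : ent q (fun ω => ((ω.2.1 : β), (ω.2.2 : Fin m), (ω.1 : α)))
      = ∑ z, w z * ent (r z) (id : α × β → α × β) + ∑ z, Real.negMulLog (w z) := by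
    have he : Function.Injective (fun x : (α × β) × Fin m => (x.1.2, x.2, x.1.1)) := by
      intro x y h
      simp only [Prod.mk.injEq] at h
      exact Prod.ext (Prod.ext h.2.2 h.1) h.2.1
    rw [ent_comp_inj (fun x : (α × β) × Fin m => (x.1.2, x.2, x.1.1)) he q (fun ω => (((ω.1 : α), (ω.2.1 : β)), (ω.2.2 : Fin m)))]
    exact eFull
  have eXYZ : ent q (fun ω => ((ω.1 : α), (ω.2.1 : β), (ω.2.2 : Fin m)))
      = ∑ z, w z * ent (r z) (id : α × β → α × β) + ∑ z, Real.negMulLog (w z) := by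
    have he : Function.Injective (fun x : (α × β) × Fin m => (x.1.1, x.1.2, x.2)) := by
      intro x y h
      simp only [Prod.mk.injEq] at h
      exact Prod.ext (Prod.ext h.1 h.2.1) h.2.2
    rw [ent_comp_inj (fun x : (α × β) × Fin m => (x.1.1, x.1.2, x.2)) he q (fun ω => (((ω.1 : α), (ω.2.1 : β)), (ω.2.2 : Fin m)))]
    exact eFull
  simp only [cmi, fA, fB, fC, Prod.mk.injEq]
  refine ⟨?_, ?_, ?_⟩
  · rw [eXY, eZY, eXZY, eY]; simp only [Finset.sum_sub_distrib, mul_sub]; ring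
  · rw [eYX, eZX, eYZX, eX]; simp only [Finset.sum_sub_distrib, mul_sub]; ring
  · rw [eXZ, eYZ, eXYZ, eZ]
    simp only [Finset.sum_sub_distrib, Finset.sum_add_distrib, mul_sub, mul_add]; ring

end Mix2
section Decomp
variable {α β : Type} [Fintype α] [DecidableEq α] [Fintype β] [DecidableEq β] {m : ℕ}

lemma exists_mix_decomp (q : α × β × Fin m → ℝ) (hq : IsPmf q) (hne : Nonempty (α × β)) :
    ∃ (w : Fin m → ℝ) (r : Fin m → α × β → ℝ), (∀ z, 0 ≤ w z) ∧ (∑ z, w z = 1) ∧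
      (∀ z, IsPmf (r z)) ∧ q = mix w r := by
  obtain ⟨s₀⟩ := hne
  classical
  set w : Fin m → ℝ := fun z => ∑ s : α × β, q (s.1, s.2, z) with hw
  set r : Fin m → α × β → ℝ := fun z s =>
    if w z = 0 then (if s = s₀ then 1 else 0) else q (s.1, s.2, z) / w z with hr
  have hq_le : ∀ (s : α × β) (z : Fin m), q (s.1, s.2, z) ≤ w z := by
    intro s z
    exact Finset.single_le_sum (f := fun s : α × β => q (s.1, s.2, z))
      (fun i _ => hq.1 _) (Finset.mem_univ s)
  have hw0 : ∀ z, 0 ≤ w z := fun z => Finset.sum_nonneg fun s _ => hq.1 _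
  refine ⟨w, r, hw0, ?_, ?_, ?_⟩
  · rw [← hq.2]
    have e1 : ∑ ω : α × β × Fin m, q ω = ∑ a, ∑ b, ∑ z, q (a, b, z) := by
      rw [Fintype.sum_prod_type]
      exact Finset.sum_congr rfl fun a _ => Fintype.sum_prod_type _
    rw [e1, hw]
    simp_rw [Fintype.sum_prod_type]
    rw [Finset.sum_comm]
    exact Finset.sum_congr rfl fun a _ => Finset.sum_comm
  · intro z
    by_cases h : w z = 0
    · constructor
      · intro s; simp only [hr, h, if_true]; split <;> norm_num
      · simp [hr, h]
    · constructor
      · intro s; simp only [hr, h, if_false]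
        exact div_nonneg (hq.1 _) (hw0 z)
      · simp only [hr, h, if_false]
        rw [← Finset.sum_div, div_eq_one_iff_eq h]
  · funext ω
    obtain ⟨a, b, z⟩ := ω
    by_cases h : w z = 0
    · have h1 : q (a, b, z) = 0 := le_antisymm (by simpa [h] using hq_le (a, b) z) (hq.1 _)
      simp [mix, hr, h, h1]
    · simp [mix, hr, h]
      field_simp

end Decomp
section Cara
variable {α β : Type} [Fintype α] [DecidableEq α] [Fintype β] [DecidableEq β]

/-- sum-of-first-component linear functional on `((α×β)→ℝ) × ℝ³` -/
noncomputable def Lsum (α β : Type) [Fintype α] [Fintype β] :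
    (((α × β) → ℝ) × (ℝ × ℝ × ℝ)) →ₗ[ℝ] ℝ where
  toFun := fun x => ∑ s, x.1 s
  map_add' := by intro x y; simp [Finset.sum_add_distrib]
  map_smul' := by intro c x; simp [Finset.mul_sum]

lemma caratheodory_step (hne : Nonempty (α × β)) {m : ℕ}
    (F : ((α × β) → ℝ) → (ℝ × ℝ × ℝ))
    (w : Fin m → ℝ) (r : Fin m → (α × β) → ℝ)
    (hw0 : ∀ z, 0 ≤ w z) (hw1 : ∑ z, w z = 1) (hr : ∀ z, IsPmf (r z)) :
    ∃ k : ℕ, k ≤ Fintype.card α * Fintype.card β + 3 ∧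
      ∃ (c : Fin k → ℝ) (ρ : Fin k → (α × β) → ℝ), (∀ i, 0 ≤ c i) ∧ (∑ i, c i = 1) ∧
        (∀ i, IsPmf (ρ i)) ∧
        (∑ i, c i • ((ρ i, F (ρ i)) : ((α × β) → ℝ) × (ℝ × ℝ × ℝ)))
          = ∑ z, w z • ((r z, F (r z)) : ((α × β) → ℝ) × (ℝ × ℝ × ℝ)) := by
  classical
  set E := (((α × β) → ℝ) × (ℝ × ℝ × ℝ))
  set Φ : ((α × β) → ℝ) → E := fun ρ => (ρ, F ρ) with hΦ
  set S : Set E := Φ '' {ρ | IsPmf ρ} with hS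
  set v : E := ∑ z, w z • Φ (r z) with hv
  have hvmem : v ∈ convexHull ℝ S := by
    have h := Finset.centerMass_mem_convexHull (t := (Finset.univ : Finset (Fin m)))
      (w := w) (z := fun z => Φ (r z)) (s := S) (fun i _ => hw0 i) (by rw [hw1]; norm_num)
      (fun i _ => ⟨r i, hr i, rfl⟩)
    rwa [Finset.centerMass_eq_of_sum_1 _ _ hw1] at h
  obtain ⟨ι, hι, zf, cf, hrange, haff, hpos, hsum1, hsumv⟩ :=
    eq_pos_convex_span_of_mem_convexHull hvmem
  have hL : ∀ i, Lsum α β (zf i) = 1 := by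
    intro i
    obtain ⟨ρ, hρ, hφ⟩ := hrange (Set.mem_range_self i)
    rw [← hφ]
    simpa [Lsum, Φ] using hρ.2
  have hvs : vectorSpan ℝ (Set.range zf) ≤ LinearMap.ker (Lsum α β) := by
    rw [vectorSpan_def]
    refine Submodule.span_le.2 ?_
    rintro x ⟨x1, hx1, x2, hx2, rfl⟩
    obtain ⟨i, rfl⟩ := hx1
    obtain ⟨j, rfl⟩ := hx2
    simp only [SetLike.mem_coe, LinearMap.mem_ker, vsub_eq_sub, map_sub, hL, sub_self]
  have hLsurj : Function.Surjective (Lsum α β) := by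
    obtain ⟨s₀⟩ := hne
    intro c
    refine ⟨((fun s => if s = s₀ then c else 0), 0), ?_⟩
    simp [Lsum]
  have hkerrank : Module.finrank ℝ (LinearMap.ker (Lsum α β))
      = Fintype.card α * Fintype.card β + 2 := by
    have h1 := LinearMap.finrank_range_add_finrank_ker (Lsum α β)
    rw [LinearMap.range_eq_top.2 hLsurj, finrank_top, Module.finrank_self] at h1
    have hE : Module.finrank ℝ (((α × β) → ℝ) × (ℝ × ℝ × ℝ)) = Fintype.card α * Fintype.card β + 3 := by
      rw [show Module.finrank ℝ (((α × β) → ℝ) × (ℝ × ℝ × ℝ)) = Module.finrank ℝ ((α × β) → ℝ)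
          + (Module.finrank ℝ ℝ + (Module.finrank ℝ ℝ + Module.finrank ℝ ℝ)) by
        rw [Module.finrank_prod, Module.finrank_prod, Module.finrank_prod],
        Module.finrank_pi, Module.finrank_self, Fintype.card_prod]
    omega
  have hcard : Fintype.card ι ≤ Fintype.card α * Fintype.card β + 3 := by
    have h1 := haff.card_le_finrank_succ
    have h2 : Module.finrank ℝ (vectorSpan ℝ (Set.range zf))
        ≤ Module.finrank ℝ (LinearMap.ker (Lsum α β)) := Submodule.finrank_mono hvs
    have h3 := h1.trans (Nat.add_le_add_right h2 1)
    rw [hkerrank] at h3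
    omega
  refine ⟨Fintype.card ι, hcard, ?_⟩
  set eqv := (Fintype.equivFin ι).symm with heqv
  have hchoice : ∀ j : Fin (Fintype.card ι),
      ∃ ρ, IsPmf ρ ∧ Φ ρ = zf (eqv j) := by
    intro j
    obtain ⟨ρ, hρ, hφ⟩ := hrange (Set.mem_range_self (eqv j))
    exact ⟨ρ, hρ, hφ⟩
  choose ρ hρ1 hρ2 using hchoice
  refine ⟨fun j => cf (eqv j), ρ, fun j => (hpos (eqv j)).le, ?_, hρ1, ?_⟩
  · rw [Equiv.sum_comp eqv cf]; exact hsum1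
  · calc ∑ j, cf (eqv j) • ((ρ j, F (ρ j)) : E) = ∑ j, cf (eqv j) • zf (eqv j) := by
          refine Finset.sum_congr rfl fun j _ => ?_
          rw [show ((ρ j, F (ρ j)) : E) = Φ (ρ j) from rfl, hρ2]
      _ = ∑ i, cf i • zf i := Equiv.sum_comp eqv (fun i => cf i • zf i)
      _ = v := hsumv

end Cara


section Pad

lemma sum_pad {M : Type} [AddCommMonoid M] {k N : ℕ} (h : k ≤ N) (f : Fin k → M) :
    (∑ z : Fin N, if h' : (z : ℕ) < k then f ⟨z, h'⟩ else 0) = ∑ z, f z := by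
  have e1 : (∑ z : Fin N, if h' : (z : ℕ) < k then f ⟨z, h'⟩ else 0)
      = ∑ i ∈ Finset.range N, (if h' : i < k then f ⟨i, h'⟩ else 0) :=
    Fin.sum_univ_eq_sum_range (fun i => if h' : i < k then f ⟨i, h'⟩ else 0) N
  have e2 : (∑ z : Fin k, f z)
      = ∑ i ∈ Finset.range k, (if h' : i < k then f ⟨i, h'⟩ else 0) := by
    rw [← Fin.sum_univ_eq_sum_range (fun i => if h' : i < k then f ⟨i, h'⟩ else 0) k]
    refine Finset.sum_congr rfl fun z _ => ?_
    rw [dif_pos z.isLt]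
  rw [e1, e2]
  refine (Finset.sum_subset (Finset.range_subset_range.2 h) ?_).symm
  intro i _ hi
  rw [Finset.mem_range] at hi
  rw [dif_neg hi]

end Pad

section Point
variable {α β : Type} [Fintype α] [DecidableEq α] [Fintype β] [DecidableEq β]

lemma isPmf_point (s₀ : α × β) : IsPmf (fun s => if s = s₀ then (1 : ℝ) else 0) := by
  constructor
  · intro s; dsimp only; split <;> norm_num
  · simp

lemma distOf_id (M : α × β → ℝ) : distOf M (id : α × β → α × β) = M := by
  funext s
  simp [distOf]

lemma distOf_mix_id {m : ℕ} (w : Fin m → ℝ) (r : Fin m → α × β → ℝ) :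
    distOf (mix w r) (fun ω => ((ω.1 : α), (ω.2.1 : β))) = fun s => ∑ z, w z * r z s := by
  rw [show (fun ω : α × β × Fin m => ((ω.1 : α), (ω.2.1 : β)))
      = (fun ω => id ((ω.1 : α), (ω.2.1 : β))) from rfl]
  rw [distOf_mix_marg w r id, distOf_id]

end Point

section Key
variable {Ω α β : Type} [Fintype Ω] [Fintype α] [DecidableEq α] [Fintype β] [DecidableEq β]

lemma tension_reduce (p : Ω → ℝ) (X : Ω → α) (Y : Ω → β) {t : ℝ × ℝ × ℝ}
    (ht : t ∈ tension p X Y) {N : ℕ} (hN : Fintype.card α * Fintype.card β + 3 ≤ N) :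
    ∃ q : α × β × Fin N → ℝ, IsPmf q ∧
      distOf q (fun w => (w.1, w.2.1)) = distOf p (fun ω => (X ω, Y ω)) ∧
      t = (cmi q (fun w => w.1) (fun w => w.2.2) (fun w => w.2.1),
           cmi q (fun w => w.2.1) (fun w => w.2.2) (fun w => w.1),
           cmi q (fun w => w.1) (fun w => w.2.1) (fun w => w.2.2)) := by
  classical
  obtain ⟨m, q0, hq0, hmarg0, hT0⟩ := ht
  have hΩne : Nonempty (α × β × Fin m) := by
    by_contra hcon
    rw [not_nonempty_iff] at hcon
    have := hq0.2
    rw [Finset.univ_eq_empty, Finset.sum_empty] at this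
    norm_num at this
  have hne : Nonempty (α × β) := ⟨(hΩne.some.1, hΩne.some.2.1)⟩
  obtain ⟨s₀⟩ := hne
  obtain ⟨w, r, hw0, hw1, hr, hq0eq⟩ := exists_mix_decomp q0 hq0 ⟨s₀⟩
  obtain ⟨k, hk, c, ρ, hc0, hc1, hρ, hsum⟩ :=
    caratheodory_step (α := α) (β := β) ⟨s₀⟩ (fun ρ => (fA ρ, fB ρ, fC ρ)) w r hw0 hw1 hr
  have hkN : k ≤ N := hk.trans hN
  -- pad to N
  set w' : Fin N → ℝ := fun z => if h : (z : ℕ) < k then c ⟨z, h⟩ else 0 with hw'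
  set r' : Fin N → α × β → ℝ := fun z =>
    if h : (z : ℕ) < k then ρ ⟨z, h⟩ else (fun s => if s = s₀ then 1 else 0) with hr'
  have hr'pmf : ∀ z, IsPmf (r' z) := by
    intro z
    rw [hr']
    dsimp only
    split
    · exact hρ _
    · exact isPmf_point s₀
  have hw'0 : ∀ z, 0 ≤ w' z := by
    intro z; rw [hw']; dsimp only; split
    · exact hc0 _
    · exact le_refl 0
  -- component equalities from Carathéodory
  have hcomp1 : (fun s => ∑ i, c i * ρ i s) = fun s => ∑ z, w z * r z s := by
    funext s
    have h1 := congrArg Prod.fst hsum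
    simp only [Prod.fst_sum, Prod.smul_fst, smul_eq_mul] at h1
    have h2 := congrArg (fun v : (α × β) → ℝ => v s) h1
    simpa [Finset.sum_apply] using h2
  have hcompA : (∑ i, c i * fA (ρ i)) = ∑ z, w z * fA (r z) := by
    have h1 := congrArg (fun v : (((α × β) → ℝ) × (ℝ × ℝ × ℝ)) => v.2.1) hsum
    simpa [Prod.snd_sum, Prod.fst_sum, Prod.smul_snd, Prod.smul_fst, smul_eq_mul] using h1
  have hcompB : (∑ i, c i * fB (ρ i)) = ∑ z, w z * fB (r z) := by
    have h1 := congrArg (fun v : (((α × β) → ℝ) × (ℝ × ℝ × ℝ)) => v.2.2.1) hsum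
    simpa [Prod.snd_sum, Prod.fst_sum, Prod.smul_snd, Prod.smul_fst, smul_eq_mul] using h1
  have hcompC : (∑ i, c i * fC (ρ i)) = ∑ z, w z * fC (r z) := by
    have h1 := congrArg (fun v : (((α × β) → ℝ) × (ℝ × ℝ × ℝ)) => v.2.2.2) hsum
    simpa [Prod.snd_sum, Prod.fst_sum, Prod.smul_snd, Prod.smul_fst, smul_eq_mul] using h1
  -- padded sums reduce to Fin k sums
  have hpadgen : ∀ F : ((α × β) → ℝ) → ℝ,
      (∑ z : Fin N, w' z * F (r' z)) = ∑ i : Fin k, c i * F (ρ i) := by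
    intro F
    rw [← sum_pad hkN (fun i : Fin k => c i * F (ρ i))]
    refine Finset.sum_congr rfl fun z _ => ?_
    rw [hw', hr']
    dsimp only
    split
    · rfl
    · rw [zero_mul]
  have hmargmix : (fun s => ∑ z : Fin N, w' z * r' z s) = fun s => ∑ z : Fin m, w z * r z s := by
    funext s
    rw [hpadgen (fun ρ => ρ s)]
    exact congrArg (fun v => v s) hcomp1
  refine ⟨mix w' r', ?_, ?_, ?_⟩
  · constructor
    · intro ω
      exact mul_nonneg (hw'0 _) ((hr'pmf _).1 _)
    · have e1 : ∑ ω : α × β × Fin N, mix w' r' ω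
          = ∑ a, ∑ b, ∑ z, w' z * r' z (a, b) := by
        rw [Fintype.sum_prod_type]
        refine Finset.sum_congr rfl fun a _ => ?_
        rw [Fintype.sum_prod_type]
        rfl
      have e2 : (∑ a, ∑ b, ∑ z, w' z * r' z (a, b))
          = ∑ z : Fin N, ∑ a, ∑ b, w' z * r' z (a, b) := by
        rw [show (∑ a, ∑ b, ∑ z, w' z * r' z (a, b))
            = ∑ a, ∑ z : Fin N, ∑ b, w' z * r' z (a, b) from
          Finset.sum_congr rfl fun a _ => Finset.sum_comm]
        exact Finset.sum_comm
      have e3 : ∀ z : Fin N, (∑ a, ∑ b, w' z * r' z (a, b)) = w' z := by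
        intro z
        rw [show (∑ a, ∑ b, w' z * r' z (a, b)) = w' z * ∑ a, ∑ b, r' z (a, b) by
          simp [Finset.mul_sum]]
        have h2 := (hr'pmf z).2
        rw [Fintype.sum_prod_type] at h2
        rw [h2, mul_one]
      rw [e1, e2]
      simp_rw [e3]
      rw [← hc1, ← sum_pad hkN c]
  · rw [show (fun w : α × β × Fin N => (w.1, w.2.1))
        = (fun ω : α × β × Fin N => ((ω.1 : α), (ω.2.1 : β))) from rfl]
    rw [distOf_mix_id w' r', hmargmix, ← distOf_mix_id w r, ← hq0eq]
    exact hmarg0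
  · have hmix0 := cmi_mix w r hr
    have hmixN := cmi_mix w' r' hr'pmf
    rw [hmargmix] at hmixN
    rw [hpadgen fA, hpadgen fB, hpadgen fC, hcompA, hcompB, hcompC] at hmixN
    have hT0' : t = (cmi (mix w r) (fun w => w.1) (fun w => w.2.2) (fun w => w.2.1),
        cmi (mix w r) (fun w => w.2.1) (fun w => w.2.2) (fun w => w.1),
        cmi (mix w r) (fun w => w.1) (fun w => w.2.1) (fun w => w.2.2)) := by
      rw [hT0, hq0eq]
    rw [hT0', hmix0, hmixN]

end Key

section Cont
variable {Ω : Type} [Fintype Ω] {γ : Type} [Fintype γ] [DecidableEq γ]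

lemma continuous_distOf_q (f : Ω → γ) (a : γ) :
    Continuous fun q : Ω → ℝ => distOf q f a := by
  unfold distOf
  apply continuous_finset_sum
  intro ω _
  by_cases h : f ω = a
  · simpa [h] using continuous_apply ω
  · simp only [h, if_false]
    exact continuous_const

lemma continuous_ent_q (f : Ω → γ) : Continuous fun q : Ω → ℝ => ent q f := by
  unfold ent
  apply continuous_finset_sum
  intro a _
  exact Real.continuous_negMulLog.comp (continuous_distOf_q f a)

end Cont

/-- The tension region is unchanged when `Z` is restricted to alphabets of
size at most `|𝒳|·|𝒴|+3`; consequently `T(X;Y)` is compact. -/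
theorem stmt13 {Ω α β : Type} [Fintype Ω]
    [Fintype α] [DecidableEq α] [Fintype β] [DecidableEq β]
    (p : Ω → ℝ) (hp : IsPmf p) (X : Ω → α) (Y : Ω → β) :
    tension p X Y =
      { t | ∃ (m : ℕ), m ≤ Fintype.card α * Fintype.card β + 3 ∧
        ∃ q : α × β × Fin m → ℝ, IsPmf q ∧
          distOf q (fun w => (w.1, w.2.1)) = distOf p (fun ω => (X ω, Y ω)) ∧
          t = (cmi q (fun w => w.1) (fun w => w.2.2) (fun w => w.2.1),
               cmi q (fun w => w.2.1) (fun w => w.2.2) (fun w => w.1),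
               cmi q (fun w => w.1) (fun w => w.2.1) (fun w => w.2.2)) } ∧
    IsCompact (tension p X Y) := by
  classical
  set N := Fintype.card α * Fintype.card β + 3 with hN
  constructor
  · ext t
    simp only [Set.mem_setOf_eq]
    constructor
    · intro ht
      obtain ⟨q, h1, h2, h3⟩ := tension_reduce p X Y ht (le_refl N)
      exact ⟨N, le_rfl, q, h1, h2, h3⟩
    · rintro ⟨m, _, q, h1, h2, h3⟩
      exact ⟨m, q, h1, h2, h3⟩
  · set D := distOf p (fun ω => (X ω, Y ω)) with hD
    set K : Set (α × β × Fin N → ℝ) :=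
      {q | IsPmf q ∧ distOf q (fun w => (w.1, w.2.1)) = D} with hK
    set G : (α × β × Fin N → ℝ) → ℝ × ℝ × ℝ := fun q =>
      (cmi q (fun w => w.1) (fun w => w.2.2) (fun w => w.2.1),
       cmi q (fun w => w.2.1) (fun w => w.2.2) (fun w => w.1),
       cmi q (fun w => w.1) (fun w => w.2.1) (fun w => w.2.2)) with hG
    have himg : tension p X Y = G '' K := by
      apply Set.Subset.antisymm
      · intro t ht
        obtain ⟨q, h1, h2, h3⟩ := tension_reduce p X Y ht (le_refl N)
        exact ⟨q, ⟨h1, h2⟩, h3.symm⟩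
      · rintro t ⟨q, ⟨h1, h2⟩, rfl⟩
        exact ⟨N, q, h1, h2, rfl⟩
    rw [himg]
    have hGcont : Continuous G := by
      rw [hG]
      refine Continuous.prodMk ?_ (Continuous.prodMk ?_ ?_) <;>
      · simp only [cmi]
        exact (((continuous_ent_q _).add (continuous_ent_q _)).sub
          (continuous_ent_q _)).sub (continuous_ent_q _)
    have hclosed : IsClosed K := by
      have hKeq : K = ({q : α × β × Fin N → ℝ | ∀ ω, 0 ≤ q ω} ∩ {q | ∑ ω, q ω = 1})
          ∩ {q | distOf q (fun w => (w.1, w.2.1)) = D} := by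
        ext q
        simp only [hK, Set.mem_setOf_eq, Set.mem_inter_iff, IsPmf]
      rw [hKeq]
      refine IsClosed.inter (IsClosed.inter ?_ ?_) ?_
      · have h1 : {q : α × β × Fin N → ℝ | ∀ ω, 0 ≤ q ω}
            = ⋂ ω, {q : α × β × Fin N → ℝ | 0 ≤ q ω} := by
          ext q; simp
        rw [h1]
        exact isClosed_iInter fun ω => isClosed_le continuous_const (continuous_apply ω)
      · exact isClosed_eq (continuous_finset_sum _ fun ω _ => continuous_apply ω)
          continuous_const
      · have h1 : {q : α × β × Fin N → ℝ | distOf q (fun w => (w.1, w.2.1)) = D}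
            = ⋂ a, {q : α × β × Fin N → ℝ | distOf q (fun w => (w.1, w.2.1)) a = D a} := by
          ext q; simp [funext_iff]
        rw [h1]
        exact isClosed_iInter fun a => isClosed_eq (continuous_distOf_q _ _) continuous_const
    have hbdd : Bornology.IsBounded K := by
      rw [isBounded_iff_forall_norm_le]
      refine ⟨1, ?_⟩
      rintro q ⟨hq1, -⟩
      rw [pi_norm_le_iff_of_nonneg zero_le_one]
      intro ω
      rw [Real.norm_eq_abs, abs_le]
      refine ⟨by linarith [hq1.1 ω], ?_⟩
      calc q ω ≤ ∑ ω', q ω' :=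
            Finset.single_le_sum (fun i _ => hq1.1 i) (Finset.mem_univ ω)
        _ = 1 := hq1.2
    exact (Metric.isCompact_of_isClosed_isBounded hclosed hbdd).image hGcont
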